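/- Let p > 1, l > 1, and let c₀, k₀ : [0,∞) → ℝ be continuous and nonnegative with 0 < ∫₀^∞ c₀(t) dt < ∞ and 0 < ∫₀^∞ k₀(t) dt < ∞. If w₀ > min{((p−1)∫₀^∞ c₀(t) dt)^{−1/(p−1)}, ((l−1)∫₀^∞ k₀(t) dt)^{−1/(l−1)}}, then there is no differentiable function w : [0,∞) → ℝ with w(0) = w₀ and w′(t) = c₀(t) w(t)^p + k₀(t) w(t)^l for all t ≥ 0. -/

import Mathlib

open MeasureTheory Set Filter Topology

private lemma aux_blowup (p : ℝ) (hp : 1 < p) (c : ℝ → ℝ)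
    (hc_cont : ContinuousOn c (Ici 0)) (hc_nonneg : ∀ t ≥ (0:ℝ), 0 ≤ c t)
    (hc_int : IntegrableOn c (Ioi 0)) (hc_pos : 0 < ∫ t in Ioi (0:ℝ), c t)
    (w f : ℝ → ℝ)
    (hw : ∀ t ≥ (0:ℝ), HasDerivAt w (f t) t)
    (hf0 : ∀ t ≥ (0:ℝ), 0 ≤ w t → 0 ≤ f t)
    (hfge : ∀ t ≥ (0:ℝ), 0 ≤ w t → c t * w t ^ p ≤ f t)
    (hw₀ : ((p - 1) * ∫ t in Ioi (0:ℝ), c t) ^ (-(1 / (p - 1)) : ℝ) < w 0) :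
    False := by
  set C : ℝ := ∫ t in Ioi (0:ℝ), c t with hC
  have hp1 : (0:ℝ) < p - 1 := by linarith
  have hA : 0 < (p - 1) * C := mul_pos hp1 hc_pos
  have hw0pos : 0 < w 0 := lt_trans (Real.rpow_pos_of_pos hA _) hw₀
  -- key inequality : w 0 ^ (1 - p) < (p-1) * C
  have hkey : w 0 ^ (1 - p) < (p - 1) * C := by
    have h1 : w 0 ^ (1 - p) < (((p - 1) * C) ^ (-(1 / (p - 1)) : ℝ)) ^ (1 - p) :=
      Real.rpow_lt_rpow_of_neg (Real.rpow_pos_of_pos hA _) hw₀ (by linarith)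
    have h2 : (((p - 1) * C) ^ (-(1 / (p - 1)) : ℝ)) ^ (1 - p) = (p - 1) * C := by
      rw [← Real.rpow_mul hA.le]
      have : (-(1 / (p - 1))) * (1 - p) = 1 := by field_simp; ring
      rw [this, Real.rpow_one]
    rwa [h2] at h1
  -- positivity of w on [0, ∞)
  have hwpos : ∀ t ≥ (0:ℝ), 0 < w t := by
    by_contra h
    push_neg at h
    obtain ⟨t₀, ht₀, hwt₀⟩ := h
    set S : Set ℝ := {t | 0 ≤ t ∧ w t ≤ 0} with hS
    have hne : S.Nonempty := ⟨t₀, ht₀, hwt₀⟩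
    have hbdd : BddBelow S := ⟨0, fun x hx => hx.1⟩
    set s := sInf S with hs
    have hs0 : 0 ≤ s := le_csInf hne fun x hx => hx.1
    have hws : w s ≤ 0 := by
      have hsc : s ∈ closure S := csInf_mem_closure hne hbdd
      obtain ⟨u, hu_mem, hu_lim⟩ := mem_closure_iff_seq_limit.1 hsc
      exact le_of_tendsto (((hw s hs0).continuousAt.tendsto).comp hu_lim)
        (Eventually.of_forall fun n => (hu_mem n).2)
    have hmono : MonotoneOn w (Icc 0 s) := by
      apply monotoneOn_of_deriv_nonneg (convex_Icc 0 s)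
      · exact fun u hu => (hw u hu.1).continuousAt.continuousWithinAt
      · intro u hu
        rw [interior_Icc] at hu
        exact (hw u hu.1.le).differentiableAt.differentiableWithinAt
      · intro u hu
        rw [interior_Icc] at hu
        rw [(hw u hu.1.le).deriv]
        have huS : u ∉ S := fun hmem => absurd (csInf_le hbdd hmem) (not_le.2 hu.2)
        have hwu : 0 ≤ w u := by
          by_contra hneg
          exact huS ⟨hu.1.le, (not_le.1 hneg).le⟩
        exact hf0 u hu.1.le hwu
    have : w 0 ≤ w s := hmono ⟨le_refl 0, hs0⟩ ⟨hs0, le_refl s⟩ hs0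
    linarith
  -- primitive of c
  set F : ℝ → ℝ := fun t => ∫ s in (0:ℝ)..t, c s with hF
  have hF_tendsto : Tendsto F atTop (𝓝 C) :=
    intervalIntegral_tendsto_integral_Ioi 0 hc_int tendsto_id
  have hF_tendsto' : Tendsto (fun t => (p - 1) * F t) atTop (𝓝 ((p - 1) * C)) :=
    hF_tendsto.const_mul _
  obtain ⟨T, hT⟩ := ((hF_tendsto'.eventually_const_lt hkey).and (eventually_ge_atTop (0:ℝ))).exists
  obtain ⟨hTgt, hT0⟩ := hT
  -- derivative of F at interior points
  have hF_int : ∀ t : ℝ, 0 ≤ t → IntervalIntegrable c volume 0 t := by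
    intro t ht
    rw [intervalIntegrable_iff_integrableOn_Ioc_of_le ht]
    exact hc_int.mono_set Ioc_subset_Ioi_self
  have hF_deriv : ∀ t : ℝ, 0 < t → HasDerivAt F (c t) t := by
    intro t ht
    have hca : ContinuousAt c t :=
      hc_cont.continuousAt (Ici_mem_nhds ht)
    exact intervalIntegral.integral_hasDerivAt_right (hF_int t ht.le)
      (ContinuousOn.stronglyMeasurableAtFilter isOpen_Ioi (hc_cont.mono Ioi_subset_Ici_self) t ht) hca
  -- the function h := w^(1-p) + (p-1) F is antitone on [0, T]
  set g : ℝ → ℝ := fun t => w t ^ (1 - p) + (p - 1) * F t with hg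
  have hg_deriv : ∀ t : ℝ, 0 < t →
      HasDerivAt g (f t * (1 - p) * w t ^ (1 - p - 1) + (p - 1) * c t) t := by
    intro t ht
    exact ((hw t ht.le).rpow_const (Or.inl (hwpos t ht.le).ne')).add
      ((hF_deriv t ht).const_mul (p - 1))
  have hg_anti : AntitoneOn g (Icc 0 T) := by
    apply antitoneOn_of_deriv_nonpos (convex_Icc 0 T)
    · -- continuity on Icc 0 T
      apply ContinuousOn.add
      · intro u hu
        exact ((hw u hu.1).continuousAt.rpow_const (Or.inl (hwpos u hu.1).ne')).continuousWithinAt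
      · apply continuousOn_const.mul
        have h_int : IntegrableOn c (uIcc (0:ℝ) T) := by
          rw [uIcc_of_le hT0, integrableOn_Icc_iff_integrableOn_Ioc]
          exact hc_int.mono_set Ioc_subset_Ioi_self
        have := intervalIntegral.continuousOn_primitive_interval h_int
        rwa [uIcc_of_le hT0] at this
    · intro u hu
      rw [interior_Icc] at hu
      exact (hg_deriv u hu.1).differentiableAt.differentiableWithinAt
    · intro u hu
      rw [interior_Icc] at hu
      rw [(hg_deriv u hu.1).deriv]
      have hwu := hwpos u hu.1.le
      have hAu : 0 < w u ^ (1 - p - 1) := Real.rpow_pos_of_pos hwu _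
      have h1 : w u ^ (1 - p - 1) * (c u * w u ^ p) = c u := by
        rw [mul_comm (c u) (w u ^ p), ← mul_assoc, ← Real.rpow_add hwu]
        norm_num
      have h2 : c u ≤ w u ^ (1 - p - 1) * f u := by
        calc c u = w u ^ (1 - p - 1) * (c u * w u ^ p) := h1.symm
        _ ≤ w u ^ (1 - p - 1) * f u :=
          mul_le_mul_of_nonneg_left (hfge u hu.1.le hwu.le) hAu.le
      nlinarith [mul_le_mul_of_nonpos_left h2 (by linarith : (1:ℝ) - p ≤ 0)]
  -- conclude
  have hle : g T ≤ g 0 := hg_anti ⟨le_refl 0, hT0⟩ ⟨hT0, le_refl T⟩ hT0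
  have hg0 : g 0 = w 0 ^ (1 - p) := by
    simp [hg, hF, intervalIntegral.integral_same]
  have hgT : w 0 ^ (1 - p) < g T := by
    have : 0 < w T ^ (1 - p) := Real.rpow_pos_of_pos (hwpos T hT0) _
    simp only [hg]
    linarith
  rw [hg0] at hle
  linarith

theorem stmt_5 (p l : ℝ) (hp : 1 < p) (hl : 1 < l) (c₀ k₀ : ℝ → ℝ)
    (hc_cont : ContinuousOn c₀ (Ici 0)) (hc_nonneg : ∀ t ≥ (0:ℝ), 0 ≤ c₀ t)
    (hk_cont : ContinuousOn k₀ (Ici 0)) (hk_nonneg : ∀ t ≥ (0:ℝ), 0 ≤ k₀ t)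
    (hc_int : IntegrableOn c₀ (Ioi 0)) (hc_pos : 0 < ∫ t in Ioi (0:ℝ), c₀ t)
    (hk_int : IntegrableOn k₀ (Ioi 0)) (hk_pos : 0 < ∫ t in Ioi (0:ℝ), k₀ t)
    (w₀ : ℝ)
    (hw₀ : w₀ > min (((p - 1) * ∫ t in Ioi (0:ℝ), c₀ t) ^ (-(1 / (p - 1)) : ℝ))
                    (((l - 1) * ∫ t in Ioi (0:ℝ), k₀ t) ^ (-(1 / (l - 1)) : ℝ))) :
    ¬ ∃ w : ℝ → ℝ, w 0 = w₀ ∧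
      ∀ t ≥ (0:ℝ), HasDerivAt w (c₀ t * w t ^ p + k₀ t * w t ^ l) t := by
  rintro ⟨w, hw0, hw⟩
  subst hw0
  rcases min_lt_iff.1 hw₀ with h | h
  · exact aux_blowup p hp c₀ hc_cont hc_nonneg hc_int hc_pos w
      (fun t => c₀ t * w t ^ p + k₀ t * w t ^ l) hw
      (fun t ht hwt => add_nonneg (mul_nonneg (hc_nonneg t ht) (Real.rpow_nonneg hwt _))
        (mul_nonneg (hk_nonneg t ht) (Real.rpow_nonneg hwt _)))
      (fun t ht hwt => le_add_of_nonneg_right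
        (mul_nonneg (hk_nonneg t ht) (Real.rpow_nonneg hwt _))) h
  · have hw' : ∀ t ≥ (0:ℝ), HasDerivAt w (k₀ t * w t ^ l + c₀ t * w t ^ p) t := by
      intro t ht
      have := hw t ht
      rwa [add_comm] at this
    exact aux_blowup l hl k₀ hk_cont hk_nonneg hk_int hk_pos w
      (fun t => k₀ t * w t ^ l + c₀ t * w t ^ p) hw'
      (fun t ht hwt => add_nonneg (mul_nonneg (hk_nonneg t ht) (Real.rpow_nonneg hwt _))
        (mul_nonneg (hc_nonneg t ht) (Real.rpow_nonneg hwt _)))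
      (fun t ht hwt => le_add_of_nonneg_right
        (mul_nonneg (hc_nonneg t ht) (Real.rpow_nonneg hwt _))) h
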